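/- Let n ≥ 1, let 0 ≤ k ≤ n, and let φ be a continuous valuation on 𝒦(ℝⁿ) such that for every convex body K the function (t, x) ↦ φ(tK + x) is C^k on [0,1] × ℝⁿ, and such that ∂^j/∂t^j φ(tK + x)|_{t=0} = 0 for all j < k, all K, and all x. Define ψ(K, x) := (1/k!) · ∂^k/∂t^k φ(tK + x)|_{t=0}. Then for every fixed x ∈ ℝⁿ: (a) ψ(·, x) is translation invariant, i.e. ψ(K + a, x) = ψ(K, x) for every a ∈ ℝⁿ and every K; (b) ψ(·, x) is positively homogeneous of degree k, i.e. ψ(sK, x) = s^k ψ(K, x) for every s > 0; and (c) ψ(·, x) is a valuation: ψ(K ∪ K', x) + ψ(K ∩ K', x) = ψ(K, x) + ψ(K', x) whenever K ∪ K' is convex. -/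

import Mathlib

open scoped Pointwise ContDiff
open MeasureTheory Set Filter

noncomputable section

/-- Euclidean space `ℝⁿ`. -/
abbrev Euc (n : ℕ) := EuclideanSpace ℝ (Fin n)

/-- The one-point convex body `{x}`. -/
def ptBody {n : ℕ} (x : Euc n) : ConvexBody (Euc n) :=
  ⟨{x}, convex_singleton x, isCompact_singleton, Set.singleton_nonempty x⟩

/-- The convex body `t • K + x`. -/
def scaleTrans {n : ℕ} (t : ℝ) (x : Euc n) (K : ConvexBody (Euc n)) : ConvexBody (Euc n) :=
  t • K + ptBody x

/-- `φ` is a valuation: whenever `M = K ∪ L` and `N = K ∩ L` are convex bodies,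
`φ M + φ N = φ K + φ L`. -/
def IsValuation {n : ℕ} (φ : ConvexBody (Euc n) → ℂ) : Prop :=
  ∀ K L M N : ConvexBody (Euc n),
    (M : Set (Euc n)) = (K : Set (Euc n)) ∪ (L : Set (Euc n)) →
    (N : Set (Euc n)) = (K : Set (Euc n)) ∩ (L : Set (Euc n)) →
    φ M + φ N = φ K + φ L

/-- `ψ(K, x) = (1/k!) ∂^k/∂t^k φ(tK + x)|_{t=0}` (one-sided derivative at `0`). -/
def psiDeriv {n : ℕ} (φ : ConvexBody (Euc n) → ℂ) (k : ℕ)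
    (K : ConvexBody (Euc n)) (x : Euc n) : ℂ :=
  ((Nat.factorial k : ℂ))⁻¹ * iteratedDerivWithin k (fun t => φ (scaleTrans t x K)) (Set.Ici 0) 0

section Helpers

variable {E : Type*} [NormedAddCommGroup E] [NormedSpace ℝ E]

lemma iDW_congr_set {f : ℝ → ℂ} {s t : Set ℝ} {x : ℝ} (h : s =ᶠ[nhds x] t) (n : ℕ) :
    iteratedDerivWithin n f s x = iteratedDerivWithin n f t x := by
  simp only [iteratedDerivWithin_eq_iteratedFDerivWithin, iteratedFDerivWithin_congr_set h]

lemma icc_eventuallyEq_Ici {t : ℝ} (ht : 0 < t) : Icc (0:ℝ) t =ᶠ[nhds 0] Ici 0 := by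
  rw [Filter.eventuallyEq_set]
  filter_upwards [Ioo_mem_nhds (neg_lt_zero.2 ht) ht] with s hs
  exact ⟨fun h => h.1, fun h => ⟨h, hs.2.le⟩⟩

lemma iDW_monomial (d : ℂ) (k : ℕ) {s1 : Set ℝ} (hs1 : UniqueDiffOn ℝ s1) :
    ∀ j ≤ k, ∀ x ∈ s1, iteratedDerivWithin j (fun s : ℝ => s ^ k • d) s1 x
      = ((k.descFactorial j : ℝ) * x ^ (k - j)) • d := by
  have key : ∀ (m : ℕ) (C : ℝ) (x : ℝ),
      HasDerivAt (fun s : ℝ => (C * s ^ m) • d) ((C * (m * x ^ (m-1))) • d) x := by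
    intro m C x
    exact (((hasDerivAt_pow m x).const_mul C)).smul_const d
  intro j hj
  induction j with
  | zero => intro x hx; simp
  | succ j ih =>
    intro x hx
    have hj' : j ≤ k := Nat.le_of_succ_le hj
    rw [iteratedDerivWithin_succ]
    have hcg : derivWithin (iteratedDerivWithin j (fun s : ℝ => s ^ k • d) s1) s1 x
        = derivWithin (fun s : ℝ => ((k.descFactorial j : ℝ) * s ^ (k - j)) • d) s1 x := by
      apply derivWithin_congr
      · intro y hy; exact ih hj' y hy
      · exact ih hj' x hx
    rw [hcg, ((key (k - j) _ x).hasDerivWithinAt).derivWithin (hs1 x hx)]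
    congr 1
    have hjk : j < k := hj
    have h1 : k - j - 1 = k - (j+1) := by omega
    have h2 : (k.descFactorial (j+1) : ℝ) = (k - j : ℕ) * (k.descFactorial j : ℝ) := by
      rw [Nat.descFactorial_succ]; push_cast; ring
    rw [h1, h2]
    push_cast [Nat.cast_sub hjk.le]
    ring

lemma claimA {k : ℕ} {F : ℝ × E → ℂ}
    (hF : ContDiffOn ℝ (k : WithTop ℕ∞) F (Icc (0:ℝ) 1 ×ˢ (univ : Set E)))
    {s1 : Set ℝ} (hs1 : UniqueDiffOn ℝ s1) (hsub : s1 ⊆ Icc 0 1) (y : E) :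
    ∀ j ≤ k, ∀ t ∈ s1,
      iteratedDerivWithin j (fun s => F (s, y)) s1 t
        = iteratedFDerivWithin ℝ j F (Icc (0:ℝ) 1 ×ˢ (univ : Set E)) (t, y)
            (fun _ => ((1:ℝ), (0:E))) := by
  have hS : UniqueDiffOn ℝ (Icc (0:ℝ) 1 ×ˢ (univ : Set E)) :=
    (uniqueDiffOn_Icc zero_lt_one).prod uniqueDiffOn_univ
  set S := Icc (0:ℝ) 1 ×ˢ (univ : Set E) with hSdef
  have hmaps : MapsTo (fun s : ℝ => (s, y)) s1 S := fun s hs => ⟨hsub hs, mem_univ _⟩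
  intro j hj
  induction j with
  | zero =>
    intro t ht
    simp [iteratedFDerivWithin_zero_apply]
  | succ j ih =>
    intro t ht
    have hj' : j ≤ k := Nat.le_of_succ_le hj
    have hjk : (j : WithTop ℕ∞) < (k : WithTop ℕ∞) := by exact_mod_cast (hj : j + 1 ≤ k)
    have hdiff : DifferentiableWithinAt ℝ (iteratedFDerivWithin ℝ j F S) S (t, y) :=
      (hF.differentiableOn_iteratedFDerivWithin hjk hS) _ (hmaps ht)
    have hγ : HasFDerivWithinAt (fun s : ℝ => (s, y))
        ((ContinuousLinearMap.id ℝ ℝ).prod 0) s1 t :=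
      ((hasFDerivAt_id t).prodMk (hasFDerivAt_const y t)).hasFDerivWithinAt
    have h1 : HasFDerivWithinAt (fun s : ℝ => iteratedFDerivWithin ℝ j F S (s, y))
        ((fderivWithin ℝ (iteratedFDerivWithin ℝ j F S) S (t, y)).comp
          ((ContinuousLinearMap.id ℝ ℝ).prod 0)) s1 t :=
      (hdiff.hasFDerivWithinAt).comp t hγ hmaps
    have h2 : HasDerivWithinAt
        (fun s : ℝ => iteratedFDerivWithin ℝ j F S (s, y) (fun _ => ((1:ℝ), (0:E))))
        (iteratedFDerivWithin ℝ (j+1) F S (t, y) (fun _ => ((1:ℝ), (0:E)))) s1 t := by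
      have h3 := ((ContinuousMultilinearMap.apply ℝ (fun _ : Fin j => ℝ × E) ℂ
        (fun _ => ((1:ℝ), (0:E)))).hasFDerivAt.comp_hasFDerivWithinAt t h1).hasDerivWithinAt
      convert h3 using 1
      all_goals rfl
    rw [iteratedDerivWithin_succ]
    have hcg : derivWithin (iteratedDerivWithin j (fun s => F (s, y)) s1) s1 t
        = derivWithin (fun s : ℝ => iteratedFDerivWithin ℝ j F S (s, y)
            (fun _ => ((1:ℝ), (0:E)))) s1 t := by
      apply derivWithin_congr
      · intro u hu; exact ih hj' u hu
      · exact ih hj' t ht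
    rw [hcg, h2.derivWithin (hs1 t ht)]

lemma keyLimit {k : ℕ} {F : ℝ × E → ℂ}
    (hF : ContDiffOn ℝ (k : WithTop ℕ∞) F (Icc (0:ℝ) 1 ×ˢ (univ : Set E)))
    (hvan : ∀ y : E, ∀ j < k, iteratedDerivWithin j (fun t => F (t, y)) (Ici 0) 0 = 0)
    (x a : E) :
    Tendsto (fun t : ℝ => F (t, x + t • a) / (t:ℂ)^k) (nhdsWithin 0 (Ioi 0))
      (nhds ((k.factorial : ℂ)⁻¹ *
        iteratedDerivWithin k (fun t => F (t, x)) (Ici 0) 0)) := by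
  have hS : UniqueDiffOn ℝ (Icc (0:ℝ) 1 ×ˢ (univ : Set E)) :=
    (uniqueDiffOn_Icc zero_lt_one).prod uniqueDiffOn_univ
  set S := Icc (0:ℝ) 1 ×ˢ (univ : Set E) with hSdef
  cases k with
  | zero =>
    simp only [pow_zero, div_one, Nat.factorial_zero, Nat.cast_one, inv_one, one_mul,
      iteratedDerivWithin_zero]
    have hc : ContinuousWithinAt F S (0, x) :=
      hF.continuousOn _ ⟨⟨le_rfl, zero_le_one⟩, mem_univ _⟩
    apply hc.tendsto.comp
    rw [tendsto_nhdsWithin_iff]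
    constructor
    · refine (Continuous.tendsto' (by fun_prop) 0 (0, x) (by simp)).mono_left
        nhdsWithin_le_nhds
    · filter_upwards [Ioc_mem_nhdsGT_of_mem (Set.left_mem_Ico.mpr zero_lt_one)] with t ht
      exact ⟨⟨ht.1.le, ht.2⟩, mem_univ _⟩
  | succ m =>
    set G : ℝ × E → ℂ := fun p => iteratedFDerivWithin ℝ (m+1) F S p (fun _ => ((1:ℝ), (0:E)))
      with hGdef
    set d : ℂ := (((m+1).factorial : ℂ))⁻¹ * G (0, x) with hddef
    have hfactR : (((m+1).factorial : ℝ)) ≠ 0 := Nat.cast_ne_zero.2 (Nat.factorial_ne_zero _)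
    have hfactC : (((m+1).factorial : ℂ)) ≠ 0 := Nat.cast_ne_zero.2 (Nat.factorial_ne_zero _)
    have hdval : iteratedDerivWithin (m+1) (fun t => F (t, x)) (Ici 0) 0 = G (0, x) := by
      rw [iDW_congr_set (icc_eventuallyEq_Ici zero_lt_one).symm (m+1)]
      exact claimA hF (uniqueDiffOn_Icc zero_lt_one) subset_rfl x (m+1) le_rfl 0
        ⟨le_rfl, zero_le_one⟩
    rw [hdval]
    have hsmul : (((m+1).factorial : ℝ)) • d = G (0, x) := by
      rw [hddef, Complex.real_smul]
      push_cast
      field_simp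
    have hGcont : ContinuousOn G S := fun p hp =>
      ((ContinuousMultilinearMap.apply ℝ (fun _ : Fin (m+1) => ℝ × E) ℂ
          (fun _ => ((1:ℝ), (0:E)))).continuous.continuousAt).comp_continuousWithinAt
        (hF.continuousOn_iteratedFDerivWithin (by exact_mod_cast le_rfl) hS p hp)
    rw [Metric.tendsto_nhdsWithin_nhds]
    intro ε hε
    set ε' : ℝ := m.factorial * (ε / 2) with hε'def
    have hε' : 0 < ε' := by positivity
    have hGc := hGcont (0, x) ⟨⟨le_rfl, zero_le_one⟩, mem_univ _⟩
    rw [Metric.continuousWithinAt_iff] at hGc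
    obtain ⟨δ₁, hδ₁, hG⟩ := hGc ε' hε'
    have hapos : (0:ℝ) < 1 + ‖a‖ := by positivity
    refine ⟨min (δ₁ / (1 + ‖a‖)) 1, by positivity, ?_⟩
    intro t ht hdist
    have ht0 : (0:ℝ) < t := ht
    have htabs : dist t 0 = t := by rw [Real.dist_eq, sub_zero, abs_of_pos ht0]
    have htmin : t < min (δ₁ / (1 + ‖a‖)) 1 := by rwa [htabs] at hdist
    have ht1 : t ≤ 1 := (htmin.trans_le (min_le_right _ _)).le
    have htδ : t < δ₁ / (1 + ‖a‖) := htmin.trans_le (min_le_left _ _)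
    set y : E := x + t • a with hydef
    have hmem : ∀ s ∈ Icc (0:ℝ) t, ((s, y) : ℝ × E) ∈ S :=
      fun s hs => ⟨⟨hs.1, hs.2.trans ht1⟩, mem_univ _⟩
    have hclose : ∀ s ∈ Icc (0:ℝ) t, dist ((s, y) : ℝ × E) (0, x) < δ₁ := by
      intro s hs
      rw [Prod.dist_eq]
      have h1 : dist s 0 < δ₁ := by
        rw [Real.dist_eq, sub_zero, abs_of_nonneg hs.1]
        calc s ≤ t := hs.2
          _ < δ₁ / (1 + ‖a‖) := htδ
          _ ≤ δ₁ := by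
            rw [div_le_iff₀ hapos]
            nlinarith [norm_nonneg a, hδ₁]
      have h2 : dist y x < δ₁ := by
        rw [hydef, dist_eq_norm, add_sub_cancel_left, norm_smul, Real.norm_eq_abs,
          abs_of_pos ht0]
        calc t * ‖a‖ ≤ t * (1 + ‖a‖) := by nlinarith [norm_nonneg a]
          _ < δ₁ := by rwa [← lt_div_iff₀ hapos]
      exact max_lt h1 h2
    have hbound : ∀ s ∈ Icc (0:ℝ) t, ‖G (s, y) - G (0, x)‖ ≤ ε' := fun s hs => by
      rw [← dist_eq_norm]
      exact (hG (hmem s hs) (hclose s hs)).le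
    -- Taylor estimate
    have hIcc : UniqueDiffOn ℝ (Icc (0:ℝ) t) := uniqueDiffOn_Icc ht0
    have hsub' : Icc (0:ℝ) t ⊆ Icc 0 1 := Icc_subset_Icc le_rfl ht1
    have hfy : ContDiffOn ℝ (((m+1:ℕ)) : WithTop ℕ∞) (fun s => F (s, y)) (Icc (0:ℝ) t) := by
      apply hF.comp ((contDiff_id.prodMk contDiff_const).contDiffOn)
      exact fun s hs => ⟨hsub' hs, mem_univ _⟩
    have hmono : ContDiffOn ℝ (((m+1:ℕ)) : WithTop ℕ∞) (fun s : ℝ => s ^ (m+1) • d)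
        (Icc (0:ℝ) t) := ((contDiff_id.pow (m+1)).smul contDiff_const).contDiffOn
    have hft : ContDiffOn ℝ (((m+1:ℕ)) : WithTop ℕ∞)
        (fun s : ℝ => F (s, y) - s ^ (m+1) • d) (Icc (0:ℝ) t) := hfy.sub hmono
    have hder : ∀ s ∈ Icc (0:ℝ) t,
        iteratedDerivWithin (m+1) (fun s : ℝ => F (s, y) - s ^ (m+1) • d) (Icc (0:ℝ) t) s
          = G (s, y) - G (0, x) := by
      intro s hs
      have hsplit : iteratedDerivWithin (m+1) (fun s : ℝ => F (s, y) - s ^ (m+1) • d)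
          (Icc (0:ℝ) t) s
          = iteratedDerivWithin (m+1) (fun s : ℝ => F (s, y)) (Icc (0:ℝ) t) s
            - iteratedDerivWithin (m+1) (fun s : ℝ => s ^ (m+1) • d) (Icc (0:ℝ) t) s :=
        iteratedDerivWithin_sub hs hIcc (hfy s hs) (hmono s hs)
      rw [hsplit, claimA hF hIcc hsub' y (m+1) le_rfl s hs,
        iDW_monomial d (m+1) hIcc (m+1) le_rfl s hs]
      rw [Nat.descFactorial_self, Nat.sub_self, pow_zero, mul_one, hsmul]
    have hvanf : ∀ j ≤ m,
        iteratedDerivWithin j (fun s : ℝ => F (s, y) - s ^ (m+1) • d) (Icc (0:ℝ) t) 0 = 0 := by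
      intro j hj
      have h0mem : (0:ℝ) ∈ Icc (0:ℝ) t := ⟨le_rfl, ht0.le⟩
      have hjle : (j : WithTop ℕ∞) ≤ ((m+1:ℕ) : WithTop ℕ∞) := by
        exact_mod_cast Nat.le_succ_of_le hj
      have hsplit : iteratedDerivWithin j (fun s : ℝ => F (s, y) - s ^ (m+1) • d)
          (Icc (0:ℝ) t) 0
          = iteratedDerivWithin j (fun s : ℝ => F (s, y)) (Icc (0:ℝ) t) 0
            - iteratedDerivWithin j (fun s : ℝ => s ^ (m+1) • d) (Icc (0:ℝ) t) 0 :=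
        iteratedDerivWithin_sub h0mem hIcc (hfy.of_le hjle 0 h0mem) (hmono.of_le hjle 0 h0mem)
      rw [hsplit, iDW_congr_set (icc_eventuallyEq_Ici ht0) j,
        hvan y j (Nat.lt_succ_of_le hj),
        iDW_monomial d (m+1) hIcc j (Nat.le_succ_of_le hj) 0 h0mem]
      rw [zero_pow (by omega : m + 1 - j ≠ 0), mul_zero, zero_smul, sub_zero]
    have htaylor0 : taylorWithinEval (fun s : ℝ => F (s, y) - s ^ (m+1) • d) m
        (Icc (0:ℝ) t) 0 t = 0 := by
      rw [taylor_within_apply]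
      apply Finset.sum_eq_zero
      intro j hj
      rw [hvanf j (Nat.lt_succ_iff.mp (Finset.mem_range.mp hj)), smul_zero]
    have hest := taylor_mean_remainder_bound (C := ε') ht0.le hft (right_mem_Icc.2 ht0.le)
      (fun s hs => by rw [hder s hs]; exact hbound s hs)
    rw [htaylor0, sub_zero, sub_zero] at hest
    -- conclude
    have htC : ((t:ℂ)) ^ (m+1) ≠ 0 := pow_ne_zero _ (by exact_mod_cast ht0.ne')
    have hrw : F (t, y) / (t:ℂ)^(m+1) - d = (F (t, y) - t ^ (m+1) • d) / (t:ℂ)^(m+1) := by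
      rw [Complex.real_smul]
      push_cast
      field_simp
    rw [dist_eq_norm, hrw, norm_div]
    have hnorm : ‖((t:ℂ)) ^ (m+1)‖ = t ^ (m+1) := by
      rw [norm_pow, Complex.norm_real, Real.norm_eq_abs, abs_of_pos ht0]
    rw [hnorm]
    have htp : (0:ℝ) < t ^ (m+1) := pow_pos ht0 _
    calc ‖F (t, y) - t ^ (m+1) • d‖ / t ^ (m+1)
        ≤ (ε' * t ^ (m+1) / m.factorial) / t ^ (m+1) := by gcongr
      _ = ε / 2 := by
          rw [hε'def]
          field_simp
      _ < ε := by linarith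

end Helpers

lemma ptBody_coe {n : ℕ} (x : Euc n) : (ptBody x : Set (Euc n)) = {x} := rfl

lemma coe_scaleTrans {n : ℕ} (t : ℝ) (x : Euc n) (K : ConvexBody (Euc n)) :
    (scaleTrans t x K : Set (Euc n)) = t • (K : Set (Euc n)) + {x} := by
  rw [scaleTrans, ConvexBody.coe_add, ConvexBody.coe_smul, ptBody_coe]

lemma ptBody_add {n : ℕ} (u v : Euc n) : ptBody u + ptBody v = ptBody (u + v) := by
  apply ConvexBody.ext
  rw [ConvexBody.coe_add, ptBody_coe, ptBody_coe, ptBody_coe, Set.singleton_add_singleton]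

lemma smul_ptBody {n : ℕ} (t : ℝ) (a : Euc n) : t • ptBody a = ptBody (t • a) := by
  apply ConvexBody.ext
  rw [ConvexBody.coe_smul, ptBody_coe, ptBody_coe, Set.smul_set_singleton]

lemma scaleTrans_add_pt {n : ℕ} (t : ℝ) (x a : Euc n) (K : ConvexBody (Euc n)) :
    scaleTrans t x (K + ptBody a) = scaleTrans t (x + t • a) K := by
  rw [scaleTrans, scaleTrans, smul_add, smul_ptBody, add_assoc, ptBody_add, add_comm (t • a) x]

lemma scaleTrans_smul_body {n : ℕ} (t c : ℝ) (x : Euc n) (K : ConvexBody (Euc n)) :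
    scaleTrans t x (c • K) = scaleTrans (c * t) x K := by
  rw [scaleTrans, scaleTrans, smul_smul, mul_comm]

/-- For a continuous valuation `φ` such that `(t,x) ↦ φ(tK+x)` is `C^k` and whose derivatives
of order `< k` at `t = 0` vanish, the function `ψ(K,x) = (1/k!) ∂^k_t φ(tK+x)|₀` is, for each
fixed `x`: (a) translation invariant in `K`, (b) positively homogeneous of degree `k` in `K`,
and (c) a valuation in `K`. -/
theorem leading_term_is_translation_invariant_homogeneous_valuation {n : ℕ} (hn : 1 ≤ n)
    (k : ℕ) (hk : k ≤ n)
    (φ : ConvexBody (Euc n) → ℂ) (hval : IsValuation φ) (hcont : Continuous φ)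
    (hsm : ∀ K : ConvexBody (Euc n),
      ContDiffOn ℝ (k : WithTop ℕ∞) (fun p : ℝ × Euc n => φ (scaleTrans p.1 p.2 K))
        (Set.Icc 0 1 ×ˢ (Set.univ : Set (Euc n))))
    (hvan : ∀ (K : ConvexBody (Euc n)) (x : Euc n), ∀ j < k,
      iteratedDerivWithin j (fun t => φ (scaleTrans t x K)) (Set.Ici 0) 0 = 0) :
    ∀ x : Euc n,
      (∀ (a : Euc n) (K : ConvexBody (Euc n)),
          psiDeriv φ k (K + ptBody a) x = psiDeriv φ k K x) ∧
      (∀ (c : ℝ), 0 < c → ∀ K : ConvexBody (Euc n),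
          psiDeriv φ k (c • K) x = (c : ℂ) ^ k * psiDeriv φ k K x) ∧
      (∀ K L M N : ConvexBody (Euc n),
          (M : Set (Euc n)) = (K : Set (Euc n)) ∪ (L : Set (Euc n)) →
          (N : Set (Euc n)) = (K : Set (Euc n)) ∩ (L : Set (Euc n)) →
          psiDeriv φ k M x + psiDeriv φ k N x = psiDeriv φ k K x + psiDeriv φ k L x) := by
  intro x
  have key : ∀ (K : ConvexBody (Euc n)) (a : Euc n),
      Tendsto (fun t : ℝ => φ (scaleTrans t (x + t • a) K) / (t:ℂ)^k)
        (nhdsWithin 0 (Ioi 0)) (nhds (psiDeriv φ k K x)) := by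
    intro K a
    exact keyLimit (F := fun p : ℝ × Euc n => φ (scaleTrans p.1 p.2 K)) (hsm K)
      (fun y j hj => hvan K y j hj) x a
  have key0 : ∀ K : ConvexBody (Euc n),
      Tendsto (fun t : ℝ => φ (scaleTrans t x K) / (t:ℂ)^k)
        (nhdsWithin 0 (Ioi 0)) (nhds (psiDeriv φ k K x)) := by
    intro K
    have h := key K 0
    simp only [smul_zero, add_zero] at h
    exact h
  refine ⟨?_, ?_, ?_⟩
  · intro a K
    have T1 := key0 (K + ptBody a)
    have T2 := key K a
    have he : (fun t : ℝ => φ (scaleTrans t (x + t • a) K) / (t:ℂ)^k)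
        = fun t : ℝ => φ (scaleTrans t x (K + ptBody a)) / (t:ℂ)^k := by
      funext t; rw [scaleTrans_add_pt]
    rw [he] at T2
    exact tendsto_nhds_unique T1 T2
  · intro c hc K
    have T1 := key0 (c • K)
    have hmap : Tendsto (fun t : ℝ => c * t) (nhdsWithin 0 (Ioi 0)) (nhdsWithin 0 (Ioi 0)) := by
      rw [tendsto_nhdsWithin_iff]
      constructor
      · exact ((continuous_const.mul continuous_id).tendsto' 0 0 (by simp)).mono_left
          nhdsWithin_le_nhds
      · filter_upwards [self_mem_nhdsWithin] with t ht
        exact mul_pos hc ht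
    have T0' := ((key0 K).comp hmap).const_mul ((c:ℂ)^k)
    have he : (fun t : ℝ => (c:ℂ)^k * (((fun s : ℝ => φ (scaleTrans s x K) / (s:ℂ)^k) ∘
          fun t : ℝ => c * t) t))
        =ᶠ[nhdsWithin (0:ℝ) (Ioi 0)] fun t : ℝ => φ (scaleTrans t x (c • K)) / (t:ℂ)^k := by
      filter_upwards [self_mem_nhdsWithin] with t ht
      have hcne : (c:ℂ) ≠ 0 := by exact_mod_cast hc.ne'
      have htne : (t:ℂ) ≠ 0 := by
        simpa using (ne_of_gt (show (0:ℝ) < t from ht))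
      simp only [Function.comp_apply, scaleTrans_smul_body t c x K]
      push_cast
      field_simp
      ring
    exact tendsto_nhds_unique T1 (T0'.congr' he)
  · intro K L M N hM hN
    have he : (fun t : ℝ => φ (scaleTrans t x K) / (t:ℂ)^k + φ (scaleTrans t x L) / (t:ℂ)^k)
        =ᶠ[nhdsWithin (0:ℝ) (Ioi 0)]
          fun t : ℝ => φ (scaleTrans t x M) / (t:ℂ)^k + φ (scaleTrans t x N) / (t:ℂ)^k := by
      filter_upwards [self_mem_nhdsWithin] with t ht
      have ht0 : (0:ℝ) < t := ht
      have hU : ((scaleTrans t x M : ConvexBody (Euc n)) : Set (Euc n))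
          = ↑(scaleTrans t x K) ∪ ↑(scaleTrans t x L) := by
        simp only [coe_scaleTrans, hM, smul_set_union, Set.union_add]
      have hI : ((scaleTrans t x N : ConvexBody (Euc n)) : Set (Euc n))
          = ↑(scaleTrans t x K) ∩ ↑(scaleTrans t x L) := by
        simp only [coe_scaleTrans, hN]
        rw [Set.smul_set_inter₀ (ne_of_gt ht0), Set.add_singleton, Set.add_singleton,
          Set.add_singleton, Set.image_inter (add_left_injective x)]
      have hv := hval (scaleTrans t x K) (scaleTrans t x L)
        (scaleTrans t x M) (scaleTrans t x N) hU hI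
      rw [← add_div, ← add_div, hv]
    exact tendsto_nhds_unique ((key0 M).add (key0 N))
      ((((key0 K).add (key0 L))).congr' he)
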